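/- arXiv:1509.09162 — 2 statements merged into one kernel-verified Lean document; each statement's English description precedes it below -/
import Mathlib

section
/- Let p₁, p₂ ∈ (1,∞] with 1/p₁ + 1/p₂ < 1, and let r₁, r₂ ∈ (0,∞). Suppose there exist a constant C ≥ 1 and exponents t₁, t₂ ≥ 0 such that for all n₁, n₂ and all bounded bilinear forms U : ℓ_{p₁}^{n₁} × ℓ_{p₂}^{n₂} → ℂ we have (Σ_{i=1}^{n₁} (Σ_{j=1}^{n₂} |U(e_i,e_j)|^{r₂})^{r₁/r₂})^{1/r₁} ≤ C n₁^{t₁} n₂^{t₂} ‖U‖. Then t₂ ≥ max{1/r₂ − (1 − 1/p₂), 0}. -/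
open scoped ENNReal

lemma coord_le' {ι : Type*} [Fintype ι] (p : ℝ≥0∞) [Fact (1 ≤ p)]
    (x : PiLp p (fun _ : ι => ℂ)) (i : ι) : ‖x i‖ ≤ ‖x‖ := by
  rcases p.dichotomy with rfl | h
  · rw [PiLp.norm_eq_ciSup]
    exact le_ciSup (f := fun j => ‖x j‖) (Set.Finite.bddAbove (Set.finite_range _)) i
  · have hp0 : 0 < p.toReal := lt_of_lt_of_le one_pos h
    rw [PiLp.norm_eq_sum hp0]
    have e1 : ‖x i‖ = (‖x i‖ ^ p.toReal) ^ (1 / p.toReal) := by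
      rw [← Real.rpow_mul (norm_nonneg _), mul_one_div_cancel hp0.ne', Real.rpow_one]
    rw [e1]
    apply Real.rpow_le_rpow (Real.rpow_nonneg (norm_nonneg _) _)
    · exact Finset.single_le_sum (fun j _ => Real.rpow_nonneg (norm_nonneg _) _)
        (Finset.mem_univ i)
    · positivity

lemma sum_bound' (p : ℝ≥0∞) [Fact (1 ≤ p)] (n : ℕ)
    (y : PiLp p (fun _ : Fin n => ℂ)) :
    ‖∑ j, y j‖ ≤ (n : ℝ) ^ (1 - (p⁻¹).toReal) * ‖y‖ := by
  have h1 : ‖∑ j, y j‖ ≤ ∑ j : Fin n, ‖y j‖ := norm_sum_le _ _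
  rcases eq_or_ne p ∞ with rfl | hp
  · simp only [ENNReal.inv_top, ENNReal.toReal_zero, sub_zero, Real.rpow_one]
    calc ‖∑ j, y j‖ ≤ ∑ j : Fin n, ‖y j‖ := h1
      _ ≤ ∑ _j : Fin n, ‖y‖ := Finset.sum_le_sum fun j _ => coord_le' ∞ y j
      _ = (n : ℝ) * ‖y‖ := by simp [Finset.sum_const, mul_comm]
  · have ht : 1 ≤ p.toReal := by
      have := (Fact.out : 1 ≤ p)
      rw [← ENNReal.toReal_one]
      exact ENNReal.toReal_mono hp this
    have ht0 : 0 < p.toReal := lt_of_lt_of_le one_pos ht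
    have hq : (p⁻¹).toReal = (p.toReal)⁻¹ := by
      rw [ENNReal.toReal_inv]
    have holder := Real.inner_le_weight_mul_Lp_of_nonneg Finset.univ ht
      (fun _ : Fin n => (1 : ℝ)) (fun j => ‖y j‖) (fun _ => zero_le_one)
      (fun j => norm_nonneg _)
    simp only [one_mul, Finset.sum_const, Finset.card_univ, Fintype.card_fin,
      nsmul_eq_mul, mul_one] at holder
    calc ‖∑ j, y j‖ ≤ ∑ j : Fin n, ‖y j‖ := h1
      _ ≤ (n : ℝ) ^ (1 - (p.toReal)⁻¹) * (∑ j : Fin n, ‖y j‖ ^ p.toReal) ^ (p.toReal)⁻¹ :=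
        holder
      _ = (n : ℝ) ^ (1 - (p⁻¹).toReal) * ‖y‖ := by
        rw [hq, PiLp.norm_eq_sum ht0, one_div]

lemma rpow_le_exp {a b K : ℝ} (hK : 0 < K)
    (h : ∀ n : ℕ, 1 ≤ n → (n : ℝ) ^ a ≤ K * (n : ℝ) ^ b) : a ≤ b := by
  by_contra hab
  push_neg at hab
  set ε := a - b with hε
  have hε0 : 0 < ε := sub_pos.mpr hab
  obtain ⟨n, hn⟩ := exists_nat_gt (max 1 (K ^ (1 / ε)))
  have hn1 : (1 : ℝ) ≤ n := le_of_lt (lt_of_le_of_lt (le_max_left _ _) hn)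
  have hn1' : 1 ≤ n := by exact_mod_cast hn1
  have hn0 : (0 : ℝ) < n := lt_of_lt_of_le one_pos hn1
  have key := h n hn1'
  have ha : (n : ℝ) ^ a = (n : ℝ) ^ b * (n : ℝ) ^ ε := by
    rw [← Real.rpow_add hn0, hε]; ring_nf
  rw [ha] at key
  have hb0 : (0 : ℝ) < (n : ℝ) ^ b := Real.rpow_pos_of_pos hn0 b
  have hle : (n : ℝ) ^ ε ≤ K := by
    have := le_of_mul_le_mul_right (by linarith [key] : (n:ℝ)^ε * (n:ℝ)^b ≤ K * (n:ℝ)^b) hb0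
    exact this
  have hKn : K < (n : ℝ) ^ ε := by
    have h1 : K ^ (1 / ε) < (n : ℝ) := lt_of_le_of_lt (le_max_right _ _) hn
    have h2 : (K ^ (1 / ε)) ^ ε < (n : ℝ) ^ ε :=
      Real.rpow_lt_rpow (Real.rpow_nonneg hK.le _) h1 hε0
    rwa [← Real.rpow_mul hK.le, one_div_mul_cancel hε0.ne', Real.rpow_one] at h2
  linarith

/-- Optimality of the exponent `t₂` in the bilinear mixed-sum inequality:
necessarily `t₂ ≥ max(1/r₂ - (1 - 1/p₂), 0)`. -/
theorem stmt6 (p₁ p₂ : ℝ≥0∞) [Fact (1 ≤ p₁)] [Fact (1 ≤ p₂)]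
    (hp₁ : 1 < p₁) (hp₂ : 1 < p₂) (hp : p₁⁻¹ + p₂⁻¹ < 1)
    (r₁ r₂ : ℝ) (hr₁ : 0 < r₁) (hr₂ : 0 < r₂)
    (C : ℝ) (hC : 1 ≤ C) (t₁ t₂ : ℝ) (ht₁ : 0 ≤ t₁) (ht₂ : 0 ≤ t₂)
    (h : ∀ (n₁ n₂ : ℕ)
      (U : PiLp p₁ (fun _ : Fin n₁ => ℂ) →L[ℂ] PiLp p₂ (fun _ : Fin n₂ => ℂ) →L[ℂ] ℂ),
      (∑ i : Fin n₁, (∑ j : Fin n₂, ‖U (WithLp.toLp p₁ (Pi.single i 1)) (WithLp.toLp p₂ (Pi.single j 1))‖ ^ r₂) ^ (r₁ / r₂)) ^ (1 / r₁)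
        ≤ C * (n₁ : ℝ) ^ t₁ * (n₂ : ℝ) ^ t₂ * ‖U‖) :
    max (1 / r₂ - (1 - (p₂⁻¹).toReal)) 0 ≤ t₂ := by
  set q : ℝ := (p₂⁻¹).toReal with hqdef
  rw [max_le_iff]
  refine ⟨?_, ht₂⟩
  rw [sub_le_iff_le_add]
  -- it suffices to show 1/r₂ ≤ t₂ + (1 - q)
  refine rpow_le_exp (lt_of_lt_of_le one_pos hC) (fun n hn => ?_)
  -- construct U for n₁ = 1, n₂ = n
  set Y := PiLp p₂ (fun _ : Fin n => ℂ)
  -- the sum functional on Y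
  let fl : Y →ₗ[ℂ] ℂ :=
    { toFun := fun y => ∑ j, y j
      map_add' := by intro y z; exact Finset.sum_add_distrib
      map_smul' := by
        intro c y
        simp only [RingHom.id_apply, smul_eq_mul, Finset.mul_sum]
        exact Finset.sum_congr rfl (fun j _ => rfl) }
  have hfb : ∀ y : Y, ‖fl y‖ ≤ (n : ℝ) ^ (1 - q) * ‖y‖ := fun y => sum_bound' p₂ n y
  let f : Y →L[ℂ] ℂ := LinearMap.mkContinuous fl ((n : ℝ) ^ (1 - q)) hfb
  let c : PiLp p₁ (fun _ : Fin 1 => ℂ) →L[ℂ] ℂ := PiLp.proj p₁ _ (0 : Fin 1)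
  have hc : ‖c‖ ≤ 1 := by
    apply ContinuousLinearMap.opNorm_le_bound _ zero_le_one
    intro x
    rw [one_mul]
    exact coord_le' p₁ x 0
  let U : PiLp p₁ (fun _ : Fin 1 => ℂ) →L[ℂ] Y →L[ℂ] ℂ := c.smulRight f
  have hU : ‖U‖ ≤ (n : ℝ) ^ (1 - q) := by
    rw [ContinuousLinearMap.norm_smulRight_apply]
    calc ‖c‖ * ‖f‖ ≤ 1 * ((n : ℝ) ^ (1 - q)) := by
          apply mul_le_mul hc (LinearMap.mkContinuous_norm_le fl
            (Real.rpow_nonneg (Nat.cast_nonneg n) _) hfb) (norm_nonneg _) zero_le_one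
      _ = (n : ℝ) ^ (1 - q) := one_mul _
  have happ : ∀ (i : Fin 1) (j : Fin n),
      ‖U (WithLp.toLp p₁ (Pi.single i 1)) (WithLp.toLp p₂ (Pi.single j 1))‖ = 1 := by
    intro i j
    have hi : i = 0 := Subsingleton.elim i 0
    subst hi
    have hc0 : c (WithLp.toLp p₁ (Pi.single (0 : Fin 1) 1)) = 1 := by
      simp [c, PiLp.proj_apply]
    have hf0 : f (WithLp.toLp p₂ (Pi.single j 1)) = 1 := by
      have : f (WithLp.toLp p₂ (Pi.single j 1)) = ∑ k, Pi.single j (1:ℂ) k :=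
        LinearMap.mkContinuous_apply fl _ hfb _
      rw [this, Finset.sum_pi_single']
      simp
    simp only [U, ContinuousLinearMap.smulRight_apply, ContinuousLinearMap.smul_apply,
      smul_eq_mul, hc0, hf0, one_mul, norm_one]
  have key := h 1 n U
  have hn0 : (0 : ℝ) ≤ n := Nat.cast_nonneg n
  have lhs_eq : (∑ i : Fin 1, (∑ j : Fin n,
      ‖U (WithLp.toLp p₁ (Pi.single i 1)) (WithLp.toLp p₂ (Pi.single j 1))‖ ^ r₂) ^ (r₁ / r₂)) ^ (1 / r₁)
      = (n : ℝ) ^ (1 / r₂) := by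
    have : ∀ i : Fin 1, (∑ j : Fin n,
        ‖U (WithLp.toLp p₁ (Pi.single i 1)) (WithLp.toLp p₂ (Pi.single j 1))‖ ^ r₂) ^ (r₁ / r₂) = (n : ℝ) ^ (r₁ / r₂) := by
      intro i
      congr 1
      rw [Finset.sum_congr rfl (fun j _ => by rw [happ i j, Real.one_rpow])]
      simp
    rw [Finset.sum_congr rfl (fun i _ => this i)]
    simp only [Finset.sum_const, Finset.card_univ, Fintype.card_fin, one_smul]
    rw [← Real.rpow_mul hn0]
    congr 1
    field_simp
  rw [lhs_eq] at key
  have rhs_le : C * (1 : ℝ) ^ t₁ * (n : ℝ) ^ t₂ * ‖U‖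
      ≤ C * (n : ℝ) ^ (t₂ + (1 - q)) := by
    rw [Real.one_rpow, mul_one]
    have hnn : (0:ℝ) < n := lt_of_lt_of_le one_pos (by exact_mod_cast hn)
    rw [Real.rpow_add hnn, ← mul_assoc]
    apply mul_le_mul_of_nonneg_left hU
    positivity
  calc (n : ℝ) ^ (1 / r₂) ≤ C * (1 : ℝ) ^ t₁ * (n : ℝ) ^ t₂ * ‖U‖ := by exact_mod_cast key
    _ ≤ C * (n : ℝ) ^ (t₂ + (1 - q)) := rhs_le
end

section
/- Let m ≥ 2, p₁,…,p_m ∈ [1,∞] with |1/p| := Σ_j 1/p_j ≤ 1/2, and r₁,…,r_m ∈ [1,2] with Σ_j 1/r_j > (m+1)/2 − |1/p|. Assume the generalized Hardy–Littlewood inequality holds: for any s₁,…,s_m ∈ [(1−|1/p|)^{-1}, 2] with Σ_j 1/s_j = (m+1)/2 − |1/p| there is D ≥ 1 with (Σ_{i₁}(…(Σ_{i_m}|T(e_{i₁},…,e_{i_m})|^{s_m})^{s_{m-1}/s_m}…)^{s₁/s₂})^{1/s₁} ≤ D‖T‖ for all m-linear T : ℓ_{p₁}^n × ⋯ × ℓ_{p_m}^n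 → ℂ and all n. Then there is a constant D' ≥ 1 (independent of n) such that (Σ_{i₁}(…(Σ_{i_m}|T(e_{i₁},…,e_{i_m})|^{r_m})^{r_{m-1}/r_m}…)^{r₁/r₂})^{1/r₁} ≤ D' · n^{Σ_j 1/r_j + |1/p| − (m+1)/2} · ‖T‖ for all such T and n. -/
open scoped ENNReal

noncomputable def mixedSum {n : ℕ} : (m : ℕ) → (Fin m → ℝ) → ((Fin m → Fin n) → ℝ) → ℝ
  | 0, _, F => F finZeroElim
  | m + 1, r, F =>
      (∑ i : Fin n,
        (mixedSum m (fun j => r j.succ) (fun is => F (Fin.cons i is))) ^ r 0) ^ (1 / r 0)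

open Finset in
lemma aux_lemA {n : ℕ} (a : Fin n → ℝ) (ha : ∀ i, 0 ≤ a i) {r s : ℝ}
    (hr : 0 < r) (hrs : r ≤ s) :
    (∑ i, a i ^ r) ^ (1/r) ≤ (n:ℝ) ^ (1/r - 1/s) * (∑ i, a i ^ s) ^ (1/s) := by
  have hs : 0 < s := hr.trans_le hrs
  have hp1 : 1 ≤ s / r := (one_le_div hr).2 hrs
  have H := Real.inner_le_weight_mul_Lp_of_nonneg (Finset.univ (α := Fin n)) hp1
    (fun _ => 1) (fun i => a i ^ r) (fun _ => zero_le_one)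
    (fun i => Real.rpow_nonneg (ha i) r)
  simp only [one_mul, Finset.sum_const, Finset.card_univ, Fintype.card_fin,
    nsmul_eq_mul, mul_one] at H
  have hpow : ∀ i, (a i ^ r) ^ (s / r) = a i ^ s := by
    intro i
    rw [← Real.rpow_mul (ha i)]
    congr 1
    field_simp
  simp only [hpow] at H
  have hinv : (s / r)⁻¹ = r / s := by rw [inv_div]
  rw [hinv] at H
  have h1 : (0:ℝ) ≤ ∑ i, a i ^ r :=
    Finset.sum_nonneg fun i _ => Real.rpow_nonneg (ha i) r
  have h2 : (0:ℝ) ≤ ∑ i, a i ^ s :=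
    Finset.sum_nonneg fun i _ => Real.rpow_nonneg (ha i) s
  have H2 := Real.rpow_le_rpow h1 H (by positivity : (0:ℝ) ≤ 1/r)
  calc (∑ i, a i ^ r) ^ (1/r)
      ≤ ((n:ℝ) ^ (1 - r/s) * (∑ i, a i ^ s) ^ (r/s)) ^ (1/r) := H2
    _ = (n:ℝ) ^ (1/r - 1/s) * (∑ i, a i ^ s) ^ (1/s) := by
        rw [Real.mul_rpow (Real.rpow_nonneg (Nat.cast_nonneg n) _)
          (Real.rpow_nonneg h2 _), ← Real.rpow_mul (Nat.cast_nonneg n),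
          ← Real.rpow_mul h2]
        congr 1 <;> [skip; congr 1] <;> field_simp <;> ring

lemma mixedSum_nonneg {n : ℕ} : ∀ (m : ℕ) (r : Fin m → ℝ) (F : (Fin m → Fin n) → ℝ),
    (∀ i, 0 ≤ F i) → 0 ≤ mixedSum m r F
  | 0, _, F, hF => hF _
  | m+1, r, F, hF => Real.rpow_nonneg (Finset.sum_nonneg fun i _ =>
      Real.rpow_nonneg (mixedSum_nonneg m _ _ fun _ => hF _) _) _

lemma mixedSum_le_mixedSum {n : ℕ} (hn : 0 < n) : ∀ (m : ℕ) (r s : Fin m → ℝ),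
    (∀ j, 0 < r j) → (∀ j, r j ≤ s j) →
    ∀ F : (Fin m → Fin n) → ℝ, (∀ i, 0 ≤ F i) →
    mixedSum m r F ≤ (n:ℝ) ^ (∑ j, (1/r j - 1/s j)) * mixedSum m s F
  | 0, r, s, _, _, F, hF => by
      simp [mixedSum]
  | m+1, r, s, hrpos, hrs, F, hF => by
      have hn' : (0:ℝ) < (n:ℝ) := by exact_mod_cast hn
      set A : Fin n → ℝ := fun i =>
        mixedSum m (fun j => r j.succ) (fun is => F (Fin.cons i is)) with hA_def
      set B : Fin n → ℝ := fun i =>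
        mixedSum m (fun j => s j.succ) (fun is => F (Fin.cons i is)) with hB_def
      have hA : ∀ i, 0 ≤ A i := fun i =>
        mixedSum_nonneg m _ _ (fun _ => hF _)
      have hB : ∀ i, 0 ≤ B i := fun i =>
        mixedSum_nonneg m _ _ (fun _ => hF _)
      set c : ℝ := (n:ℝ) ^ (∑ j : Fin m, (1/r j.succ - 1/s j.succ)) with hc_def
      have hc : 0 ≤ c := Real.rpow_nonneg hn'.le _
      have hAB : ∀ i, A i ≤ c * B i := fun i =>
        mixedSum_le_mixedSum hn m _ _ (fun j => hrpos j.succ) (fun j => hrs j.succ)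
          _ (fun _ => hF _)
      have hr0 : 0 < r 0 := hrpos 0
      have step1 : mixedSum (m+1) r F ≤ (∑ i, (c * B i) ^ r 0) ^ (1 / r 0) := by
        show (∑ i : Fin n, A i ^ r 0) ^ (1/r 0) ≤ _
        exact Real.rpow_le_rpow
          (Finset.sum_nonneg fun i _ => Real.rpow_nonneg (hA i) _)
          (Finset.sum_le_sum fun i _ => Real.rpow_le_rpow (hA i) (hAB i) hr0.le)
          (by positivity)
      have step2 : (∑ i, (c * B i) ^ r 0) ^ (1 / r 0)
          = c * (∑ i, B i ^ r 0) ^ (1 / r 0) := by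
        have : ∀ i, (c * B i) ^ r 0 = c ^ r 0 * B i ^ r 0 := fun i =>
          Real.mul_rpow hc (hB i)
        simp only [this, ← Finset.mul_sum]
        rw [Real.mul_rpow (Real.rpow_nonneg hc _)
          (Finset.sum_nonneg fun i _ => Real.rpow_nonneg (hB i) _),
          ← Real.rpow_mul hc, mul_one_div, div_self hr0.ne', Real.rpow_one]
      have step3 : (∑ i, B i ^ r 0) ^ (1 / r 0)
          ≤ (n:ℝ) ^ (1/r 0 - 1/s 0) * (∑ i, B i ^ s 0) ^ (1 / s 0) :=
        aux_lemA B hB hr0 (hrs 0)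
      calc mixedSum (m+1) r F ≤ c * (∑ i, B i ^ r 0) ^ (1 / r 0) := step2 ▸ step1
        _ ≤ c * ((n:ℝ) ^ (1/r 0 - 1/s 0) * (∑ i, B i ^ s 0) ^ (1 / s 0)) :=
            mul_le_mul_of_nonneg_left step3 hc
        _ = (n:ℝ) ^ (∑ j : Fin (m+1), (1/r j - 1/s j)) * mixedSum (m+1) s F := by
            show _ = _ * (∑ i : Fin n, B i ^ s 0) ^ (1/ s 0)
            rw [hc_def, ← mul_assoc, ← Real.rpow_add hn', Fin.sum_univ_succ, add_comm]

lemma mixedSum_of_zero {m : ℕ} (r : Fin (m+1) → ℝ) (hr : 0 < r 0)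
    (F : (Fin (m+1) → Fin 0) → ℝ) : mixedSum (m+1) r F = 0 := by
  simp only [mixedSum, Finset.univ_eq_empty, Finset.sum_empty]
  exact Real.zero_rpow (by positivity)

/-- Theorem 3 of the paper (`|1/p| ≤ 1/2`, `r ∈ [1,2]^m`): assuming the generalized
Hardy–Littlewood inequality, the mixed-sum inequality holds with the optimal power
`n^{∑ 1/r_j + |1/p| - (m+1)/2}`. -/
theorem stmt14 (m : ℕ) (hm : 2 ≤ m) (p : Fin m → ℝ≥0∞) [∀ j, Fact (1 ≤ p j)]
    (hP : ∑ j, (p j)⁻¹ ≤ 1 / 2) (r : Fin m → ℝ)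
    (hr : ∀ j, 1 ≤ r j ∧ r j ≤ 2)
    (hsum : ((m : ℝ) + 1) / 2 - (∑ j, (p j)⁻¹).toReal < ∑ j, 1 / r j)
    (hGHL : ∀ s : Fin m → ℝ,
      (∀ j, (1 - (∑ j, (p j)⁻¹).toReal)⁻¹ ≤ s j ∧ s j ≤ 2) →
      (∑ j, 1 / s j) = ((m : ℝ) + 1) / 2 - (∑ j, (p j)⁻¹).toReal →
      ∃ D : ℝ, 1 ≤ D ∧ ∀ (n : ℕ)
        (T : ContinuousMultilinearMap ℂ (fun j : Fin m => PiLp (p j) (fun _ : Fin n => ℂ)) ℂ),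
        mixedSum m s (fun i => ‖T (fun j => WithLp.toLp (p j) (Pi.single (i j) 1 : Fin n → ℂ))‖) ≤ D * ‖T‖) :
    ∃ D' : ℝ, 1 ≤ D' ∧ ∀ (n : ℕ)
      (T : ContinuousMultilinearMap ℂ (fun j : Fin m => PiLp (p j) (fun _ : Fin n => ℂ)) ℂ),
      mixedSum m r (fun i => ‖T (fun j => WithLp.toLp (p j) (Pi.single (i j) 1 : Fin n → ℂ))‖) ≤
        D' * (n : ℝ) ^ ((∑ j, 1 / r j) + (∑ j, (p j)⁻¹).toReal - ((m : ℝ) + 1) / 2) * ‖T‖ := by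
  -- notation
  set a : ℝ := (∑ j, (p j)⁻¹).toReal with ha_def
  have ha0 : 0 ≤ a := ENNReal.toReal_nonneg
  have ha2 : a ≤ 1/2 := by
    have h := ENNReal.toReal_mono (by norm_num : (1/2 : ℝ≥0∞) ≠ ⊤) hP
    rw [← ha_def] at h
    calc a ≤ ((1:ℝ≥0∞)/2).toReal := h
      _ = 1/2 := by simp [ENNReal.toReal_div]
  clear_value a
  set C : ℝ := ((m : ℝ) + 1) / 2 - a with hC_def
  clear_value C
  have hrpos : ∀ j, 0 < r j := fun j => lt_of_lt_of_le one_pos (hr j).1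
  have hrinv_half : ∀ j, (1:ℝ)/2 ≤ 1 / r j := fun j =>
    one_div_le_one_div_of_le (hrpos j) (hr j).2
  have hrinv_le : ∀ j, 1 / r j ≤ 1 := fun j => by
    rw [div_le_one (hrpos j)]; exact (hr j).1
  -- upper bounds u j
  set u : Fin m → ℝ := fun j => min (1 / r j) (1 - a) with hu_def
  have hu_half : ∀ j, (1:ℝ)/2 ≤ u j := fun j =>
    le_min (hrinv_half j) (by linarith)
  have hu_le_rinv : ∀ j, u j ≤ 1 / r j := fun j => min_le_left _ _
  have hu_le : ∀ j, u j ≤ 1 - a := fun j => min_le_right _ _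
  have hhalf_sum : ∑ _j : Fin m, (1:ℝ)/2 = (m : ℝ)/2 := by
    simp [Finset.sum_const, Finset.card_univ]; ring
  have hmC : (m : ℝ)/2 ≤ C := by rw [hC_def]; linarith
  have hCle : C ≤ ∑ j, u j := by
    by_cases hcase : ∀ j, 1 / r j < 1 - a
    · have : ∀ j, u j = 1 / r j := fun j => min_eq_left (hcase j).le
      calc C ≤ ∑ j, 1 / r j := hsum.le
        _ = ∑ j, u j := by simp [this]
    · push_neg at hcase
      obtain ⟨j0, hj0⟩ := hcase
      have key : ∀ j, (1:ℝ)/2 + (if j = j0 then 1/2 - a else 0) ≤ u j := by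
        intro j
        by_cases h : j = j0
        · subst h
          rw [if_pos rfl]
          have : (1:ℝ) - a ≤ u j := le_min hj0 le_rfl
          linarith
        · simp only [if_neg h, add_zero]
          exact hu_half j
      calc C = (m:ℝ)/2 + (1/2 - a) := by rw [hC_def]; ring
        _ = ∑ j : Fin m, ((1:ℝ)/2 + (if j = j0 then 1/2 - a else 0)) := by
            rw [Finset.sum_add_distrib, hhalf_sum, Finset.sum_ite_eq' Finset.univ j0]
            simp
        _ ≤ ∑ j, u j := Finset.sum_le_sum fun j _ => key j
  clear_value u
  -- convex combination
  set d : ℝ := (∑ j, u j) - (m:ℝ)/2 with hd_def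
  clear_value d
  have hd0 : 0 ≤ d := by
    have : (m:ℝ)/2 = ∑ _j : Fin m, (1:ℝ)/2 := hhalf_sum.symm
    rw [hd_def, this, sub_nonneg]
    exact Finset.sum_le_sum fun j _ => hu_half j
  set θ : ℝ := if d = 0 then 0 else (C - (m:ℝ)/2) / d with hθ_def
  clear_value θ
  have hθ0 : 0 ≤ θ := by
    rw [hθ_def]; split
    · exact le_rfl
    · exact div_nonneg (by linarith) hd0
  have hθ1 : θ ≤ 1 := by
    rw [hθ_def]; split
    · exact zero_le_one
    · rename_i h
      rw [div_le_one (lt_of_le_of_ne hd0 (Ne.symm h))]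
      rw [hd_def]; linarith
  set t : Fin m → ℝ := fun j => 1/2 + θ * (u j - 1/2) with ht_def
  clear_value t
  have ht_half : ∀ j, (1:ℝ)/2 ≤ t j := fun j => by
    have := hu_half j
    have : 0 ≤ θ * (u j - 1/2) := mul_nonneg hθ0 (by linarith)
    simp only [ht_def]; linarith
  have ht_pos : ∀ j, 0 < t j := fun j => lt_of_lt_of_le (by norm_num) (ht_half j)
  have ht_le_u : ∀ j, t j ≤ u j := fun j => by
    have h1 := hu_half j
    have : θ * (u j - 1/2) ≤ 1 * (u j - 1/2) :=
      mul_le_mul_of_nonneg_right hθ1 (by linarith)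
    simp only [ht_def]; linarith
  have ht_sum : ∑ j, t j = C := by
    have expand : ∑ j, t j = (m:ℝ)/2 + θ * d := by
      simp only [ht_def]
      rw [Finset.sum_add_distrib, hhalf_sum, ← Finset.mul_sum]
      congr 1
      rw [hd_def, Finset.sum_sub_distrib, hhalf_sum]
    rw [expand, hθ_def]
    split
    · rename_i h
      have hCe : C = (m:ℝ)/2 := le_antisymm (by rw [hd_def] at h; linarith [hCle]) hmC
      rw [hCe]; ring
    · rename_i h
      field_simp
      ring
  -- the intermediate exponents
  set s : Fin m → ℝ := fun j => (t j)⁻¹ with hs_def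
  have hs_inv : ∀ j, 1 / s j = t j := fun j => by
    simp only [hs_def, one_div, inv_inv]
  have h1a : (0:ℝ) < 1 - a := by linarith
  have hs_cond : ∀ j, (1 - a)⁻¹ ≤ s j ∧ s j ≤ 2 := by
    intro j
    constructor
    · exact inv_anti₀ (ht_pos j) ((ht_le_u j).trans (hu_le j))
    · calc s j = (t j)⁻¹ := rfl
        _ ≤ (1/2 : ℝ)⁻¹ := inv_anti₀ (by norm_num) (ht_half j)
        _ = 2 := by norm_num
  have hs_sum : ∑ j, 1 / s j = C := by simp only [hs_inv]; exact ht_sum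
  have hrs : ∀ j, r j ≤ s j := by
    intro j
    have h1 : t j ≤ 1 / r j := (ht_le_u j).trans (hu_le_rinv j)
    have := inv_anti₀ (ht_pos j) h1
    rwa [one_div, inv_inv] at this
  clear_value s
  -- get D from the hypothesis
  obtain ⟨D, hD1, hD2⟩ := hGHL s hs_cond hs_sum
  refine ⟨D, hD1, fun n T => ?_⟩
  set F : (Fin m → Fin n) → ℝ := fun i => ‖T (fun j => WithLp.toLp (p j) (Pi.single (i j) 1 : Fin n → ℂ))‖ with hF_def
  have hF : ∀ i, 0 ≤ F i := fun i => norm_nonneg _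
  have hδ : 0 < (∑ j, 1 / r j) + a - ((m : ℝ) + 1) / 2 := by linarith
  rcases Nat.eq_zero_or_pos n with hn | hn
  · subst hn
    obtain ⟨k, rfl⟩ : ∃ k, m = k + 1 := ⟨m - 1, by omega⟩
    rw [mixedSum_of_zero r (hrpos 0) F]
    rw [show ((0:ℕ):ℝ) = 0 by norm_num, Real.zero_rpow hδ.ne']
    simp
  · have key := mixedSum_le_mixedSum hn m r s hrpos hrs F hF
    have hGH := hD2 n T
    have hexp : (∑ j, (1/r j - 1/s j)) = (∑ j, 1 / r j) + a - ((m : ℝ) + 1) / 2 := by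
      rw [Finset.sum_sub_distrib, hs_sum, hC_def]; ring
    have hnpow : (0:ℝ) ≤ (n:ℝ) ^ ((∑ j, 1 / r j) + a - ((m : ℝ) + 1) / 2) :=
      Real.rpow_nonneg (Nat.cast_nonneg n) _
    calc mixedSum m r F
        ≤ (n:ℝ) ^ ((∑ j, 1 / r j) + a - ((m : ℝ) + 1) / 2) * mixedSum m s F := by
          rw [← hexp]; exact key
      _ ≤ (n:ℝ) ^ ((∑ j, 1 / r j) + a - ((m : ℝ) + 1) / 2) * (D * ‖T‖) :=
          mul_le_mul_of_nonneg_left hGH hnpow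
      _ = D * (n:ℝ) ^ ((∑ j, 1 / r j) + a - ((m : ℝ) + 1) / 2) * ‖T‖ := by ring
end
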